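/- Let α ∈ (1,2], let ν be a measure on S, let φ : S → ℝ^M be measurable, let U ⊆ ℝ^M be open, and let A : U → ℝ be differentiable. For θ ∈ U define p_θ(t) = [(α−1)(θ·φ(t) − A(θ)) + 1]_+^{1/(α−1)}. Assume: (i) ∫_S p_θ dν = 1 for all θ ∈ U; (ii) for ν-almost every t, the map θ ↦ p_θ(t) is differentiable on U with gradient p_θ(t)^{2−α}(φ(t) − ∇A(θ)) (interpreted as 0 where p_θ(t) = 0); (iii) for some θ₀ ∈ U there are a ball B ⊆ U around θ₀ and a ν-integrable function g with ‖p_θ(t)^{2−α}(φ(t) − ∇A(θ))‖ ≤ g(t) for all θ ∈ B and ν-a.e. t; (iv) 0 < ∫_{{p_{θ₀}>0}} p_{θ₀}^{2−α} dν < ∞ and p_{θ₀}^{2−α}‖φ‖ is ν-integrable. Then ∇A(θ₀) = (∫_{{p_{θ₀}>0}} p_{θ₀}^{2−α} φ dν) / (∫_{{p_{θ₀}>0}} p_{θ₀}^{2−α} dν), i.e. the gradient of the normalizing function is the expectation of φ under the (2−α)-escort distribution of p_{θ₀}. -/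

import Mathlib

open Filter Real MeasureTheory Topology
open scoped RealInnerProductSpace

/-- Subgradient inequality for the convex function `u ↦ (max u 0) ^ β`, `β ≥ 1`. -/
lemma sparse_core_ineq {β : ℝ} (hβ : 1 ≤ β) (u v : ℝ) :
    (if max u 0 = 0 then 0 else max u 0 ^ (β - 1)) * (β * (v - u)) ≤
      max v 0 ^ β - max u 0 ^ β := by
  have hβ0 : β ≠ 0 := by linarith
  by_cases h : max u 0 = 0
  · rw [if_pos h, h, Real.zero_rpow hβ0, zero_mul, sub_zero]
    exact Real.rpow_nonneg (le_max_right _ _) _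
  · have hupos : 0 < u := by
      rcases le_or_gt u 0 with h' | h'
      · exact absurd (max_eq_right h') h
      · exact h'
    rw [if_neg h, max_eq_left hupos.le]
    set x := max v 0 with hx
    have hx0 : 0 ≤ x := le_max_right _ _
    have hvx : v ≤ x := le_max_left _ _
    have hs : (-1 : ℝ) ≤ x / u - 1 := by
      have : 0 ≤ x / u := div_nonneg hx0 hupos.le
      linarith
    have hber := one_add_mul_self_le_rpow_one_add hs hβ
    rw [show (1 : ℝ) + (x / u - 1) = x / u by ring] at hber
    have hub : (0 : ℝ) < u ^ β := Real.rpow_pos_of_pos hupos β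
    have key : u ^ β * (1 + β * (x / u - 1)) ≤ u ^ β * (x / u) ^ β :=
      mul_le_mul_of_nonneg_left hber hub.le
    have hxu : u ^ β * (x / u) ^ β = x ^ β := by
      rw [← Real.mul_rpow hupos.le (div_nonneg hx0 hupos.le), mul_comm,
        div_mul_cancel₀ x hupos.ne']
    rw [hxu] at key
    have hum1 : u ^ (β - 1) = u ^ β / u := by
      rw [Real.rpow_sub hupos, Real.rpow_one]
    have hexp : u ^ β * (1 + β * (x / u - 1)) = u ^ β + u ^ (β - 1) * (β * (x - u)) := by
      rw [hum1]; field_simp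
    rw [hexp] at key
    have hmono : u ^ (β - 1) * (β * (v - u)) ≤ u ^ (β - 1) * (β * (x - u)) := by
      have h1 : 0 ≤ u ^ (β - 1) := Real.rpow_nonneg hupos.le _
      have h2 : β * (v - u) ≤ β * (x - u) := by nlinarith
      exact mul_le_mul_of_nonneg_left h2 h1
    linarith

/-- The gradient of the normalizing function `A` of an α-sparse family
`p_θ(t) = [(α−1)(⟨θ, φ(t)⟩ − A(θ)) + 1]₊^(1/(α−1))` is the expectation of the statistics `φ`
under the `(2−α)`-escort distribution of `p_{θ₀}`. -/
theorem stmt_5 {S : Type*} [MeasurableSpace S] (ν : Measure S)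
    (α : ℝ) (hα1 : 1 < α) (hα2 : α ≤ 2) (M : ℕ)
    (φ : S → EuclideanSpace ℝ (Fin M)) (hφ : Measurable φ)
    (U : Set (EuclideanSpace ℝ (Fin M))) (hU : IsOpen U)
    (A : EuclideanSpace ℝ (Fin M) → ℝ)
    (G : EuclideanSpace ℝ (Fin M) → EuclideanSpace ℝ (Fin M))
    (hA : ∀ θ ∈ U, HasGradientAt A (G θ) θ)
    (p : EuclideanSpace ℝ (Fin M) → S → ℝ)
    (hp : ∀ θ t, p θ t = max ((α - 1) * (⟪θ, φ t⟫ - A θ) + 1) 0 ^ (1 / (α - 1)))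
    (hp_one : ∀ θ ∈ U, ∫ t, p θ t ∂ν = 1)
    (gradp : EuclideanSpace ℝ (Fin M) → S → EuclideanSpace ℝ (Fin M))
    (hgradp : ∀ θ t, gradp θ t =
      if p θ t = 0 then 0 else (p θ t ^ (2 - α)) • (φ t - G θ))
    (hdiff : ∀ᵐ t ∂ν, ∀ θ ∈ U, HasGradientAt (fun θ' => p θ' t) (gradp θ t) θ)
    (θ₀ : EuclideanSpace ℝ (Fin M)) (hθ₀ : θ₀ ∈ U)
    (hdom : ∃ ε > 0, Metric.ball θ₀ ε ⊆ U ∧ ∃ g : S → ℝ, Integrable g ν ∧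
      ∀ θ ∈ Metric.ball θ₀ ε, ∀ᵐ t ∂ν, ‖gradp θ t‖ ≤ g t)
    (hZ : IntegrableOn (fun t => p θ₀ t ^ (2 - α)) {t | 0 < p θ₀ t} ν)
    (hZpos : 0 < ∫ t in {t | 0 < p θ₀ t}, p θ₀ t ^ (2 - α) ∂ν)
    (hφint : IntegrableOn (fun t => p θ₀ t ^ (2 - α) * ‖φ t‖) {t | 0 < p θ₀ t} ν) :
    G θ₀ = (∫ t in {t | 0 < p θ₀ t}, p θ₀ t ^ (2 - α) ∂ν)⁻¹ •
      (∫ t in {t | 0 < p θ₀ t}, (p θ₀ t ^ (2 - α)) • φ t ∂ν) := by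
  obtain ⟨ρ, hρpos, hρball⟩ := Metric.isOpen_iff.1 hU θ₀ hθ₀
  have hα1' : (0 : ℝ) < α - 1 := by linarith
  set β : ℝ := 1 / (α - 1) with hβdef
  have hβ : 1 ≤ β := by
    rw [hβdef, le_div_iff₀ hα1', one_mul]; linarith
  have hβα : β * (α - 1) = 1 := by
    rw [hβdef]; field_simp
  clear_value β
  -- basic facts about p
  have hpnn : ∀ θ t, 0 ≤ p θ t := fun θ t => by
    rw [hp θ t]; exact Real.rpow_nonneg (le_max_right _ _) _
  have hpmeas : ∀ θ, Measurable (p θ) := by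
    intro θ
    have hrw : p θ = fun t => max ((α - 1) * (⟪θ, φ t⟫ - A θ) + 1) 0 ^ β :=
      funext (hp θ)
    rw [hrw]
    have hc : Continuous fun x : ℝ => x ^ β :=
      Real.continuous_rpow_const (by linarith)
    exact hc.measurable.comp
      ((((measurable_const.inner hφ).sub_const (A θ)).const_mul (α - 1)).add_const 1
        |>.max measurable_const)
  have hpint : ∀ θ, θ ∈ U → Integrable (p θ) ν := by
    intro θ hθ
    by_contra hcon
    have h1 := hp_one θ hθ
    rw [integral_undef hcon] at h1
    exact one_ne_zero h1.symm
  set E : Set S := {t | 0 < p θ₀ t} with hEdef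
  have hE : MeasurableSet E := measurableSet_lt measurable_const (hpmeas θ₀)
  set c0 : S → ℝ := fun t => if p θ₀ t = 0 then 0 else p θ₀ t ^ (2 - α) with hc0def
  have hc0meas : Measurable c0 := by
    have hc : Continuous fun x : ℝ => x ^ (2 - α) :=
      Real.continuous_rpow_const (by linarith)
    exact Measurable.ite (measurableSet_eq_fun (hpmeas θ₀) measurable_const)
      measurable_const (hc.measurable.comp (hpmeas θ₀))
  have hc0nn : ∀ t, 0 ≤ c0 t := by
    intro t
    rw [hc0def]
    dsimp only
    split
    · exact le_refl 0
    · exact Real.rpow_nonneg (hpnn θ₀ t) _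
  have hc0E : ∀ t ∈ E, c0 t = p θ₀ t ^ (2 - α) := by
    intro t ht
    rw [hc0def]
    exact if_neg (ne_of_gt ht)
  have hc0E' : ∀ t ∉ E, c0 t = 0 := by
    intro t ht
    have hz : p θ₀ t = 0 := le_antisymm (not_lt.1 ht) (hpnn θ₀ t)
    rw [hc0def]
    exact if_pos hz
  -- the pointwise subgradient inequality
  have key : ∀ (θ : EuclideanSpace ℝ (Fin M)) (t : S),
      c0 t * (β * (((α - 1) * (⟪θ, φ t⟫ - A θ) + 1) - ((α - 1) * (⟪θ₀, φ t⟫ - A θ₀) + 1)))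
        ≤ p θ t - p θ₀ t := by
    intro θ t
    have hcore := sparse_core_ineq hβ ((α - 1) * (⟪θ₀, φ t⟫ - A θ₀) + 1)
      ((α - 1) * (⟪θ, φ t⟫ - A θ) + 1)
    have hcc : c0 t =
        if max ((α - 1) * (⟪θ₀, φ t⟫ - A θ₀) + 1) 0 = 0 then 0
        else max ((α - 1) * (⟪θ₀, φ t⟫ - A θ₀) + 1) 0 ^ (β - 1) := by
      set m := max ((α - 1) * (⟪θ₀, φ t⟫ - A θ₀) + 1) 0 with hm
      have hmnn : (0:ℝ) ≤ m := le_max_right _ _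
      have hβ0 : β ≠ 0 := by linarith
      have hpm : p θ₀ t = m ^ β := by rw [hp θ₀ t, hm]
      by_cases hm0 : m = 0
      · rw [if_pos hm0, hc0def]
        dsimp only
        rw [if_pos (by rw [hpm, hm0, Real.zero_rpow hβ0])]
      · rw [if_neg hm0, hc0def]
        dsimp only
        rw [if_neg (by rw [hpm]; exact (Real.rpow_eq_zero hmnn hβ0).not.2 hm0)]
        rw [hpm, ← Real.rpow_mul hmnn]
        congr 1
        linear_combination -hβα
    rw [hp θ t, hp θ₀ t, hcc]
    exact hcore
  -- Claim: for every v, ∫ c0 (⟪v,φ⟫ − ⟪Gθ₀,v⟫) ≤ 0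
  have claim : ∀ v : EuclideanSpace ℝ (Fin M),
      (∫ t, c0 t * (⟪v, φ t⟫ - ⟪G θ₀, v⟫) ∂ν) ≤ 0 := by
    intro v
    set r : ℕ → ℝ := fun n => ρ / (‖v‖ + 1) * (1 / (n + 1)) with hrdef
    clear_value r
    have hrpos : ∀ n, 0 < r n := by
      intro n
      rw [hrdef]
      have h1 : (0:ℝ) < ‖v‖ + 1 := by positivity
      positivity
    have hrlim : Tendsto r atTop (𝓝 0) := by
      have h := tendsto_one_div_add_atTop_nhds_zero_nat (𝕜 := ℝ)
      have := h.const_mul (ρ / (‖v‖ + 1))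
      simpa [hrdef] using this
    have hθn : ∀ n, θ₀ + r n • v ∈ U := by
      intro n
      apply hρball
      rw [Metric.mem_ball, dist_eq_norm]
      have h1 : ‖θ₀ + r n • v - θ₀‖ = r n * ‖v‖ := by
        simp [norm_smul, abs_of_pos (hrpos n)]
      rw [h1]
      have h2 : r n ≤ ρ / (‖v‖ + 1) := by
        rw [hrdef]
        have h3 : 1 / ((n:ℝ) + 1) ≤ 1 := by
          rw [div_le_one (by positivity)]; simp
        have h4 : (0:ℝ) ≤ ρ / (‖v‖ + 1) := by positivity
        calc ρ / (‖v‖ + 1) * (1 / (n + 1)) ≤ ρ / (‖v‖ + 1) * 1 :=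
              mul_le_mul_of_nonneg_left h3 h4
          _ = ρ / (‖v‖ + 1) := mul_one _
      have h5 : ρ / (‖v‖ + 1) * ‖v‖ < ρ := by
        rw [div_mul_eq_mul_div, div_lt_iff₀ (by positivity)]
        nlinarith [norm_nonneg v]
      calc r n * ‖v‖ ≤ ρ / (‖v‖ + 1) * ‖v‖ :=
            mul_le_mul_of_nonneg_right h2 (norm_nonneg v)
        _ < ρ := h5
    set δ : ℕ → ℝ := fun n => (A (θ₀ + r n • v) - A θ₀) / r n with hδdef
    clear_value δ
    have hderiv : HasDerivAt (fun s : ℝ => A (θ₀ + s • v)) ⟪G θ₀, v⟫ 0 := by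
      have h2 : HasDerivAt (fun s : ℝ => θ₀ + s • v) v 0 := by
        simpa using ((hasDerivAt_id (0 : ℝ)).smul_const v).const_add θ₀
      have h1 : HasFDerivAt A (InnerProductSpace.toDual ℝ _ (G θ₀)) (θ₀ + (0 : ℝ) • v) := by
        simpa using (hA θ₀ hθ₀).hasFDerivAt
      have h3 := h1.comp_hasDerivAt 0 h2
      simp at h3
      exact h3
    have hδlim : Tendsto δ atTop (𝓝 ⟪G θ₀, v⟫) := by
      have h4 := hasDerivAt_iff_tendsto_slope.1 hderiv
      have h5 : Tendsto r atTop (𝓝[≠] (0:ℝ)) :=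
        tendsto_nhdsWithin_iff.2 ⟨hrlim, Eventually.of_forall fun n => (hrpos n).ne'⟩
      have h6 := h4.comp h5
      refine h6.congr fun n => ?_
      rw [hδdef]
      simp [Function.comp, slope_def_field]
    obtain ⟨C, hC⟩ : ∃ C, ∀ n, |δ n| ≤ C := by
      obtain ⟨D, hD⟩ := (hδlim.abs).bddAbove_range
      exact ⟨D, fun n => hD ⟨n, rfl⟩⟩
    set a : ℕ → S → ℝ := fun n t => c0 t * (⟪v, φ t⟫ - δ n) with hadef
    clear_value a
    set bound : S → ℝ := fun t => c0 t * (‖v‖ * ‖φ t‖ + C) with hbounddef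
    have hbound0 : ∀ t ∉ E, bound t = 0 := by
      intro t ht
      rw [hbounddef]
      dsimp only
      rw [hc0E' t ht, zero_mul]
    have hboundint : Integrable bound ν := by
      have hsupp : Function.support bound ⊆ E := by
        intro t ht
        by_contra hmem
        exact ht (hbound0 t hmem)
      rw [← Set.indicator_eq_self.2 hsupp, integrable_indicator_iff hE]
      have hf : IntegrableOn
          (fun t => ‖v‖ * (p θ₀ t ^ (2 - α) * ‖φ t‖) + (p θ₀ t ^ (2 - α)) * C) E ν :=
        (hφint.const_mul ‖v‖).add (hZ.mul_const C)
      refine hf.congr_fun (fun t ht => ?_) hE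
      rw [hbounddef]
      dsimp only
      rw [hc0E t ht]
      ring
    have hmeasinner : Measurable fun t => ⟪v, φ t⟫ := measurable_const.inner hφ
    have hameas : ∀ n, AEStronglyMeasurable (a n) ν := by
      intro n
      rw [hadef]
      exact (hc0meas.mul (hmeasinner.sub_const (δ n))).aestronglyMeasurable
    have habd : ∀ n, ∀ᵐ t ∂ν, ‖a n t‖ ≤ bound t := by
      intro n
      refine Eventually.of_forall fun t => ?_
      rw [hadef, hbounddef]
      dsimp only
      rw [Real.norm_eq_abs, abs_mul, abs_of_nonneg (hc0nn t)]
      refine mul_le_mul_of_nonneg_left ?_ (hc0nn t)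
      calc |⟪v, φ t⟫ - δ n| ≤ |⟪v, φ t⟫| + |δ n| := abs_sub _ _
        _ ≤ ‖v‖ * ‖φ t‖ + C := add_le_add (abs_real_inner_le_norm v (φ t)) (hC n)
    have haint : ∀ n, Integrable (a n) ν := fun n => hboundint.mono' (hameas n) (habd n)
    have hFint : ∀ n, Integrable (fun t => (p (θ₀ + r n • v) t - p θ₀ t) / r n) ν := fun n =>
      ((hpint _ (hθn n)).sub (hpint θ₀ hθ₀)).div_const _
    have hle : ∀ n, a n ≤ fun t => (p (θ₀ + r n • v) t - p θ₀ t) / r n := by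
      intro n t
      have hk := key (θ₀ + r n • v) t
      have hip : ⟪θ₀ + r n • v, φ t⟫ = ⟪θ₀, φ t⟫ + r n * ⟪v, φ t⟫ := by
        rw [inner_add_left, real_inner_smul_left]
      rw [hip] at hk
      have h7 : (α - 1) * (⟪θ₀, φ t⟫ + r n * ⟪v, φ t⟫ - A (θ₀ + r n • v)) + 1 -
          ((α - 1) * (⟪θ₀, φ t⟫ - A θ₀) + 1)
          = (α - 1) * (r n * ⟪v, φ t⟫ - (A (θ₀ + r n • v) - A θ₀)) := by ring
      rw [h7] at hk
      rw [le_div_iff₀ (hrpos n)]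
      refine le_trans (le_of_eq ?_) hk
      have hδr : δ n * r n = A (θ₀ + r n • v) - A θ₀ := by
        rw [hδdef]; exact div_mul_cancel₀ _ (hrpos n).ne'
      calc a n t * r n = c0 t * (⟪v, φ t⟫ - δ n) * r n := by rw [hadef]
        _ = c0 t * ((β * (α - 1)) * (r n * ⟪v, φ t⟫ - δ n * r n)) := by rw [hβα]; ring
        _ = c0 t * (β * ((α - 1) * (r n * ⟪v, φ t⟫ - (A (θ₀ + r n • v) - A θ₀)))) := by
              rw [hδr]; ring
    have hFzero : ∀ n, ∫ t, (p (θ₀ + r n • v) t - p θ₀ t) / r n ∂ν = 0 := by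
      intro n
      rw [integral_div, integral_sub (hpint _ (hθn n)) (hpint θ₀ hθ₀), hp_one _ (hθn n),
        hp_one θ₀ hθ₀, sub_self, zero_div]
    have han : ∀ n, ∫ t, a n t ∂ν ≤ 0 := fun n =>
      le_of_le_of_eq (integral_mono (haint n) (hFint n) (hle n)) (hFzero n)
    have hlim : ∀ᵐ t ∂ν, Tendsto (fun n => a n t) atTop
        (𝓝 (c0 t * (⟪v, φ t⟫ - ⟪G θ₀, v⟫))) := by
      refine Eventually.of_forall fun t => ?_
      simp only [hadef]
      exact (tendsto_const_nhds.sub hδlim).const_mul (c0 t)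
    have hdct := tendsto_integral_of_dominated_convergence bound hameas hboundint habd hlim
    exact le_of_tendsto hdct (Eventually.of_forall han)
  -- assemble
  have hrpowmeas : Measurable (fun t => p θ₀ t ^ (2 - α)) :=
    (Real.continuous_rpow_const (q := 2 - α) (by linarith)).measurable.comp (hpmeas θ₀)
  have hsmulint : IntegrableOn (fun t => (p θ₀ t ^ (2 - α)) • φ t) E ν := by
    refine Integrable.mono' hφint (hrpowmeas.smul hφ).aestronglyMeasurable ?_
    refine Eventually.of_forall fun t => ?_
    rw [norm_smul, Real.norm_eq_abs, abs_of_nonneg (Real.rpow_nonneg (hpnn θ₀ t) _)]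
  set V := ∫ t in E, (p θ₀ t ^ (2 - α)) • φ t ∂ν with hVdef
  set Z := ∫ t in E, p θ₀ t ^ (2 - α) ∂ν with hZdef
  have claim2 : ∀ v : EuclideanSpace ℝ (Fin M), ⟪v, V - Z • G θ₀⟫ ≤ 0 := by
    intro v
    have h1 := claim v
    have h2 : ∫ t, c0 t * (⟪v, φ t⟫ - ⟪G θ₀, v⟫) ∂ν
        = ∫ t in E, c0 t * (⟪v, φ t⟫ - ⟪G θ₀, v⟫) ∂ν :=
      (setIntegral_eq_integral_of_forall_compl_eq_zero fun t ht => by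
        rw [hc0E' t ht, zero_mul]).symm
    have h3 : ∫ t in E, c0 t * (⟪v, φ t⟫ - ⟪G θ₀, v⟫) ∂ν
        = ∫ t in E, (⟪v, (p θ₀ t ^ (2 - α)) • φ t⟫ - ⟪G θ₀, v⟫ * (p θ₀ t ^ (2 - α))) ∂ν := by
      refine setIntegral_congr_fun hE fun t ht => ?_
      rw [hc0E t ht, real_inner_smul_right]
      ring
    have hinner1 : IntegrableOn (fun t => ⟪v, (p θ₀ t ^ (2 - α)) • φ t⟫) E ν :=
      (innerSL ℝ v).integrable_comp hsmulint
    have hinner2 : IntegrableOn (fun t => ⟪G θ₀, v⟫ * (p θ₀ t ^ (2 - α))) E ν :=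
      hZ.const_mul _
    have h4 : ∫ t in E, (⟪v, (p θ₀ t ^ (2 - α)) • φ t⟫ - ⟪G θ₀, v⟫ * (p θ₀ t ^ (2 - α))) ∂ν
        = ⟪v, V⟫ - ⟪G θ₀, v⟫ * Z := by
      rw [integral_sub hinner1 hinner2, integral_inner hsmulint v, integral_const_mul,
        hVdef, hZdef]
    have h5 : ⟪v, V - Z • G θ₀⟫ = ⟪v, V⟫ - ⟪G θ₀, v⟫ * Z := by
      rw [inner_sub_right, real_inner_smul_right, real_inner_comm v (G θ₀)]
      ring
    rw [h5, ← h4, ← h3, ← h2]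
    exact h1
  have hzero : V - Z • G θ₀ = 0 :=
    real_inner_self_nonpos.1 (claim2 (V - Z • G θ₀))
  have hVZ : V = Z • G θ₀ := sub_eq_zero.1 hzero
  rw [hVZ, smul_smul, inv_mul_cancel₀ (ne_of_gt hZpos), one_smul]
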